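/- Suppose the covering is moderate with constant C̃ (μ(U_i) ≤ C̃ μ(U_j) whenever U_i ∩ U_j ≠ ∅) and that sup_{x,y∈U_i} m(x,y) ≤ C_m for all i. Let π : I → I be a bijection such that U_{π(i)} ∩ U_i ≠ ∅ for all i ∈ I, and define K_π(x,y) = Σ_{i∈I} μ(U_{π^{-1}(i)})^{-1} χ_{U_{π^{-1}(i)}}(x) χ_{U_i}(y). Then: (1) for all y ∈ X, ∫_X K_π(x,y) m(x,y) dμ(x) ≤ C_m² N; and (2) for all x ∈ X, ∫_X K_π(x,y) m(x,y) dμ(y) ≤ C_m² C̃ N. (Kernel estimates from the proof of Lemma 5.4.) -/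

import Mathlib

open MeasureTheory
open scoped ENNReal NNReal

/-- **Kernel estimates from the proof of Lemma 5.4.** For a bijection `π` with
`U_{π(i)} ∩ U_i ≠ ∅` and the kernel
`K_π(x,y) = Σ_i μ(U_{π⁻¹(i)})⁻¹ χ_{U_{π⁻¹(i)}}(x) χ_{U_i}(y)` one has
`∫_X K_π(x,y) m(x,y) dμ(x) ≤ C_m² N` and `∫_X K_π(x,y) m(x,y) dμ(y) ≤ C_m² C̃ N`. -/
theorem stmt_8
    {X : Type*} [MeasurableSpace X] (μ : Measure X)
    {I : Type*} [Countable I] (U : I → Set X)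
    (hUmeas : ∀ i, MeasurableSet (U i))
    (hUpos : ∀ i, 0 < μ (U i)) (hUfin : ∀ i, μ (U i) < ∞)
    (hcov : ∀ x : X, ∃ i, x ∈ U i)
    (N : ℕ) (hN : ∀ x : X, {i : I | x ∈ U i}.encard ≤ N)
    (m : X → X → ℝ) (hm1 : ∀ x y, 1 ≤ m x y) (hmsymm : ∀ x y, m x y = m y x)
    (hmsub : ∀ x y z, m x y ≤ m x z * m z y) (hmmeas : Measurable (Function.uncurry m))
    (Ct : ℝ≥0∞) (hmod : ∀ i j, (U i ∩ U j).Nonempty → μ (U i) ≤ Ct * μ (U j))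
    (Cm : ℝ) (hCm : ∀ i, ∀ x ∈ U i, ∀ y ∈ U i, m x y ≤ Cm)
    (π : I ≃ I) (hπ : ∀ i, (U (π i) ∩ U i).Nonempty) :
    (∀ y : X,
      ∫⁻ x, (∑' i, (μ (U (π.symm i)))⁻¹ * (U (π.symm i)).indicator (fun _ => (1 : ℝ≥0∞)) x
          * (U i).indicator (fun _ => (1 : ℝ≥0∞)) y)
          * ENNReal.ofReal (m x y) ∂μ
        ≤ ENNReal.ofReal Cm ^ 2 * N)
    ∧
    (∀ x : X,
      ∫⁻ y, (∑' i, (μ (U (π.symm i)))⁻¹ * (U (π.symm i)).indicator (fun _ => (1 : ℝ≥0∞)) x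
          * (U i).indicator (fun _ => (1 : ℝ≥0∞)) y)
          * ENNReal.ofReal (m x y) ∂μ
        ≤ ENNReal.ofReal Cm ^ 2 * Ct * N) := by
  -- intersection points
  have hinter : ∀ i : I, (U i ∩ U (π.symm i)).Nonempty := by
    intro i
    have := hπ (π.symm i)
    rwa [Equiv.apply_symm_apply] at this
  -- nonnegativity of Cm whenever some set is inhabited
  have hCm0 : ∀ i : I, ∀ z ∈ U i, (0 : ℝ) ≤ Cm := fun i z hz =>
    le_trans (le_trans zero_le_one (hm1 z z)) (hCm i z hz z hz)
  -- key pointwise bound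
  have key : ∀ (i : I) (x y : X), x ∈ U (π.symm i) → y ∈ U i →
      ENNReal.ofReal (m x y) ≤ ENNReal.ofReal Cm ^ 2 := by
    intro i x y hx hy
    obtain ⟨z, hz1, hz2⟩ := hinter i
    have hCm0' : (0 : ℝ) ≤ Cm := hCm0 i z hz1
    have h1 : m x z ≤ Cm := hCm _ x hx z hz2
    have h2 : m z y ≤ Cm := hCm i z hz1 y hy
    have : m x y ≤ Cm * Cm :=
      le_trans (hmsub x y z)
        (mul_le_mul h1 h2 (le_trans zero_le_one (hm1 z y)) hCm0')
    calc ENNReal.ofReal (m x y) ≤ ENNReal.ofReal (Cm * Cm) := ENNReal.ofReal_le_ofReal this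
      _ = ENNReal.ofReal Cm ^ 2 := by rw [ENNReal.ofReal_mul hCm0', sq]
  -- counting bound
  have hcount : ∀ y : X, ∑' i, (U i).indicator (fun _ => (1 : ℝ≥0∞)) y ≤ N := by
    intro y
    have h1 : ∑' i, (U i).indicator (fun _ => (1 : ℝ≥0∞)) y
        = ∑' i, ({i : I | y ∈ U i}).indicator (fun _ => (1 : ℝ≥0∞)) i := by
      refine tsum_congr fun i => ?_
      by_cases h : y ∈ U i <;> simp [h, Set.indicator_apply]
    rw [h1, ← tsum_subtype, ENNReal.tsum_set_one]
    have := hN y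
    calc ({i : I | y ∈ U i}.encard : ℝ≥0∞) ≤ ((N : ℕ∞) : ℝ≥0∞) :=
          ENat.toENNReal_le.mpr (hN y)
      _ = (N : ℝ≥0∞) := by simp
  have hmx : ∀ y : X, Measurable fun x => ENNReal.ofReal (m x y) := fun y =>
    ENNReal.measurable_ofReal.comp (hmmeas.comp (measurable_id.prodMk measurable_const))
  have hmy : ∀ x : X, Measurable fun y => ENNReal.ofReal (m x y) := fun x =>
    ENNReal.measurable_ofReal.comp (hmmeas.comp (measurable_const.prodMk measurable_id))
  constructor
  · -- first estimate
    intro y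
    have hintg : ∀ x : X,
        (∑' i, (μ (U (π.symm i)))⁻¹ * (U (π.symm i)).indicator (fun _ => (1 : ℝ≥0∞)) x
          * (U i).indicator (fun _ => (1 : ℝ≥0∞)) y) * ENNReal.ofReal (m x y)
        = ∑' i, ((μ (U (π.symm i)))⁻¹ * (U i).indicator (fun _ => (1 : ℝ≥0∞)) y)
            * (U (π.symm i)).indicator (fun x => ENNReal.ofReal (m x y)) x := by
      intro x
      rw [← ENNReal.tsum_mul_right]
      refine tsum_congr fun i => ?_
      by_cases hx : x ∈ U (π.symm i) <;> simp [hx, Set.indicator_apply] <;> ring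
    calc ∫⁻ x, (∑' i, (μ (U (π.symm i)))⁻¹ * (U (π.symm i)).indicator (fun _ => (1 : ℝ≥0∞)) x
          * (U i).indicator (fun _ => (1 : ℝ≥0∞)) y) * ENNReal.ofReal (m x y) ∂μ
        = ∑' i, ∫⁻ x, ((μ (U (π.symm i)))⁻¹ * (U i).indicator (fun _ => (1 : ℝ≥0∞)) y)
            * (U (π.symm i)).indicator (fun x => ENNReal.ofReal (m x y)) x ∂μ := by
          simp_rw [hintg]
          exact lintegral_tsum fun i =>
            (measurable_const.mul ((hmx y).indicator (hUmeas _))).aemeasurable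
      _ ≤ ∑' i, ENNReal.ofReal Cm ^ 2 * (U i).indicator (fun _ => (1 : ℝ≥0∞)) y := by
          refine ENNReal.tsum_le_tsum fun i => ?_
          rw [lintegral_const_mul _ ((hmx y).indicator (hUmeas _)),
            lintegral_indicator (hUmeas _)]
          by_cases hy : y ∈ U i
          · have hb : ∫⁻ x in U (π.symm i), ENNReal.ofReal (m x y) ∂μ
                ≤ ENNReal.ofReal Cm ^ 2 * μ (U (π.symm i)) := by
              calc ∫⁻ x in U (π.symm i), ENNReal.ofReal (m x y) ∂μ
                  ≤ ∫⁻ _ in U (π.symm i), ENNReal.ofReal Cm ^ 2 ∂μ :=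
                    setLIntegral_mono measurable_const fun x hx => key i x y hx hy
                _ = ENNReal.ofReal Cm ^ 2 * μ (U (π.symm i)) := setLIntegral_const _ _
            have hμ0 : μ (U (π.symm i)) ≠ 0 := (hUpos _).ne'
            have hμt : μ (U (π.symm i)) ≠ ∞ := (hUfin _).ne
            simp only [hy, Set.indicator_of_mem, mul_one]
            calc (μ (U (π.symm i)))⁻¹ * ∫⁻ x in U (π.symm i), ENNReal.ofReal (m x y) ∂μ
                ≤ (μ (U (π.symm i)))⁻¹ * (ENNReal.ofReal Cm ^ 2 * μ (U (π.symm i))) :=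
                  mul_le_mul_right hb _
              _ = ENNReal.ofReal Cm ^ 2 * ((μ (U (π.symm i)))⁻¹ * μ (U (π.symm i))) := by ring
              _ = ENNReal.ofReal Cm ^ 2 := by rw [ENNReal.inv_mul_cancel hμ0 hμt, mul_one]
          · simp [hy]
      _ = ENNReal.ofReal Cm ^ 2 * ∑' i, (U i).indicator (fun _ => (1 : ℝ≥0∞)) y :=
          ENNReal.tsum_mul_left
      _ ≤ ENNReal.ofReal Cm ^ 2 * N := mul_le_mul_right (hcount y) _
  · -- second estimate
    intro x
    have hintg : ∀ y : X,
        (∑' i, (μ (U (π.symm i)))⁻¹ * (U (π.symm i)).indicator (fun _ => (1 : ℝ≥0∞)) x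
          * (U i).indicator (fun _ => (1 : ℝ≥0∞)) y) * ENNReal.ofReal (m x y)
        = ∑' i, ((μ (U (π.symm i)))⁻¹ * (U (π.symm i)).indicator (fun _ => (1 : ℝ≥0∞)) x)
            * (U i).indicator (fun y => ENNReal.ofReal (m x y)) y := by
      intro y
      rw [← ENNReal.tsum_mul_right]
      refine tsum_congr fun i => ?_
      by_cases hy : y ∈ U i <;> simp [hy, Set.indicator_apply] <;> ring
    calc ∫⁻ y, (∑' i, (μ (U (π.symm i)))⁻¹ * (U (π.symm i)).indicator (fun _ => (1 : ℝ≥0∞)) x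
          * (U i).indicator (fun _ => (1 : ℝ≥0∞)) y) * ENNReal.ofReal (m x y) ∂μ
        = ∑' i, ∫⁻ y, ((μ (U (π.symm i)))⁻¹ * (U (π.symm i)).indicator (fun _ => (1 : ℝ≥0∞)) x)
            * (U i).indicator (fun y => ENNReal.ofReal (m x y)) y ∂μ := by
          simp_rw [hintg]
          exact lintegral_tsum fun i =>
            (measurable_const.mul ((hmy x).indicator (hUmeas _))).aemeasurable
      _ ≤ ∑' i, ENNReal.ofReal Cm ^ 2 * Ct
            * (U (π.symm i)).indicator (fun _ => (1 : ℝ≥0∞)) x := by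
          refine ENNReal.tsum_le_tsum fun i => ?_
          rw [lintegral_const_mul _ ((hmy x).indicator (hUmeas _)),
            lintegral_indicator (hUmeas _)]
          by_cases hx : x ∈ U (π.symm i)
          · have hb : ∫⁻ y in U i, ENNReal.ofReal (m x y) ∂μ
                ≤ ENNReal.ofReal Cm ^ 2 * μ (U i) := by
              calc ∫⁻ y in U i, ENNReal.ofReal (m x y) ∂μ
                  ≤ ∫⁻ _ in U i, ENNReal.ofReal Cm ^ 2 ∂μ :=
                    setLIntegral_mono measurable_const fun y hy => key i x y hx hy
                _ = ENNReal.ofReal Cm ^ 2 * μ (U i) := setLIntegral_const _ _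
            have hμ0 : μ (U (π.symm i)) ≠ 0 := (hUpos _).ne'
            have hμt : μ (U (π.symm i)) ≠ ∞ := (hUfin _).ne
            have hmod' : μ (U i) ≤ Ct * μ (U (π.symm i)) := hmod i (π.symm i) (hinter i)
            simp only [hx, Set.indicator_of_mem, mul_one]
            calc (μ (U (π.symm i)))⁻¹ * ∫⁻ y in U i, ENNReal.ofReal (m x y) ∂μ
                ≤ (μ (U (π.symm i)))⁻¹ * (ENNReal.ofReal Cm ^ 2 * (Ct * μ (U (π.symm i)))) :=
                  mul_le_mul_right (le_trans hb (mul_le_mul_right hmod' _)) _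
              _ = ENNReal.ofReal Cm ^ 2 * Ct * ((μ (U (π.symm i)))⁻¹ * μ (U (π.symm i))) := by
                  ring
              _ = ENNReal.ofReal Cm ^ 2 * Ct := by
                  rw [ENNReal.inv_mul_cancel hμ0 hμt, mul_one]
          · simp [hx]
      _ = ENNReal.ofReal Cm ^ 2 * Ct
            * ∑' i, (U (π.symm i)).indicator (fun _ => (1 : ℝ≥0∞)) x := ENNReal.tsum_mul_left
      _ ≤ ENNReal.ofReal Cm ^ 2 * Ct * N := by
          refine mul_le_mul_right ?_ _
          calc ∑' i, (U (π.symm i)).indicator (fun _ => (1 : ℝ≥0∞)) x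
              = ∑' j, (U j).indicator (fun _ => (1 : ℝ≥0∞)) x :=
                π.symm.tsum_eq fun j => (U j).indicator (fun _ => (1 : ℝ≥0∞)) x
            _ ≤ N := hcount x
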